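/- Let v : ℝ → ℝ be continuously differentiable with v(k) > 0 for all k, and suppose the map f_{1/2}(k) := k / v(k) has strictly positive derivative everywhere. Then there exists a unique continuous strictly positive function h : ℝ → ℝ such that v(k) = k / (∫₀ᵏ (1/h(y)) dy) for all k ≠ 0, and v(0) = h(0). In other words, v is the harmonic mean of h over [0,k]. -/

import Mathlib

theorem harmonic_mean_representation
    (v : ℝ → ℝ) (hv : ContDiff ℝ 1 v) (hvpos : ∀ k, 0 < v k)
    (hderiv : ∀ k, 0 < deriv (fun x => x / v x) k) :
    ∃! h : ℝ → ℝ, Continuous h ∧ (∀ k, 0 < h k) ∧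
      (∀ k ≠ 0, v k = k / ∫ y in (0:ℝ)..k, (h y)⁻¹) ∧ v 0 = h 0 := by
  set f : ℝ → ℝ := fun x => x / v x with hf_def
  have hvne : ∀ k, v k ≠ 0 := fun k => (hvpos k).ne'
  have hfC : ContDiff ℝ 1 f := contDiff_id.div hv (fun x => hvne x)
  have hf'cont : Continuous (deriv f) := hfC.continuous_deriv le_rfl
  have hf'pos : ∀ k, 0 < deriv f k := hderiv
  set h : ℝ → ℝ := fun k => (deriv f k)⁻¹ with hh_def
  have hhcont : Continuous h := hf'cont.inv₀ (fun k => (hf'pos k).ne')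
  have hhpos : ∀ k, 0 < h k := fun k => inv_pos.2 (hf'pos k)
  have hint : ∀ k : ℝ, (∫ y in (0:ℝ)..k, (h y)⁻¹) = f k := by
    intro k
    have he : (∫ y in (0:ℝ)..k, (h y)⁻¹) = ∫ y in (0:ℝ)..k, deriv f y := by
      simp [hh_def]
    rw [he, intervalIntegral.integral_deriv_eq_sub
      (fun x _ => (hfC.differentiable one_ne_zero).differentiableAt)
      (hf'cont.intervalIntegrable _ _)]
    simp [hf_def]
  have hf0 : deriv f 0 = (v 0)⁻¹ := by
    have hd : HasDerivAt f ((1 * v 0 - 0 * deriv v 0) / (v 0) ^ 2) 0 :=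
      (hasDerivAt_id 0).div ((hv.differentiable one_ne_zero 0).hasDerivAt) (hvne 0)
    rw [hd.deriv, one_mul, zero_mul, sub_zero, sq, div_mul_eq_div_div,
      div_self (hvne 0), one_div]
  refine ⟨h, ⟨hhcont, hhpos, ?_, ?_⟩, ?_⟩
  · intro k hk
    rw [hint k]
    simp only [hf_def]
    rw [div_div_eq_mul_div, mul_comm, mul_div_assoc, div_self hk, mul_one]
  · simp [hh_def, hf0]
  · rintro h₂ ⟨hc2, hp2, hi2, h02⟩
    have hinv2 : Continuous (fun y => (h₂ y)⁻¹) :=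
      hc2.inv₀ (fun y => (hp2 y).ne')
    have hF2 : ∀ k : ℝ, (∫ y in (0:ℝ)..k, (h₂ y)⁻¹) = f k := by
      intro k
      rcases eq_or_ne k 0 with rfl | hk
      · simp [hf_def]
      · have hvk := hi2 k hk
        have hI : (∫ y in (0:ℝ)..k, (h₂ y)⁻¹) ≠ 0 := by
          intro h0'
          rw [h0', div_zero] at hvk
          exact (hvpos k).ne' hvk
        simp only [hf_def]
        rw [eq_div_iff (hvne k), mul_comm, hvk, div_mul_cancel₀ _ hI]
    have hcongr : (fun u => ∫ y in (0:ℝ)..u, (h₂ y)⁻¹) = f := funext hF2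
    funext k
    have hd2 : HasDerivAt (fun u => ∫ y in (0:ℝ)..u, (h₂ y)⁻¹) ((h₂ k)⁻¹) k :=
      intervalIntegral.integral_hasDerivAt_right
        (hinv2.intervalIntegrable _ _)
        (hinv2.stronglyMeasurableAtFilter _ _)
        hinv2.continuousAt
    rw [hcongr] at hd2
    have : deriv f k = (h₂ k)⁻¹ := hd2.deriv
    simp [hh_def, this, inv_inv]
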